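/- Let K be a nontrivially normed field which is locally compact and whose norm is ultrametric (a non-archimedean local field). Let N₁ and N₂ be two ultrametric norms on Kⁿ. Then there exists a K-basis (e_i) of Kⁿ and positive real numbers α_i > 0 and β_i > 0 (i ∈ Fin n) such that, writing every x ∈ Kⁿ as x = ∑ i, c i • e i, one has N₁(x) = max_i (α i · ‖c i‖) and N₂(x) = max_i (β i · ‖c i‖). In other words, any two ultrametric norms on Kⁿ are simultaneously diagonal with respect to some common basis. -/

import Mathlib

open Submodule Set

section helpers
variable {α : Type*} {m : ℕ}

lemma range_fin_snoc (b : Fin m → α) (e : α) :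
    Set.range (Fin.snoc b e : Fin (m + 1) → α) = insert e (Set.range b) := by
  ext x
  constructor
  · rintro ⟨i, rfl⟩
    induction i using Fin.lastCases with
    | last => simp
    | cast j => simp [Fin.snoc_castSucc]
  · rintro (rfl | ⟨j, rfl⟩)
    · exact ⟨Fin.last m, by simp⟩
    · exact ⟨j.castSucc, by simp⟩

lemma snoc_comp_castSucc {f : Fin (m + 1) → α} :
    (Fin.snoc (f ∘ Fin.castSucc) (f (Fin.last m)) : Fin (m + 1) → α) = f := by
  funext i
  induction i using Fin.lastCases with
  | last => simp
  | cast j => simp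
end helpers

open Submodule Set

section aux
variable {K : Type*} [NontriviallyNormedField K]

private def PiCopy (K : Type*) (n : ℕ) : Type _ := Fin n → K

noncomputable instance {n : ℕ} : AddCommGroup (PiCopy K n) := inferInstanceAs (AddCommGroup (Fin n → K))
instance {n : ℕ} : Module K (PiCopy K n) := inferInstanceAs (Module K (Fin n → K))
instance {n : ℕ} : Module.Finite K (PiCopy K n) := inferInstanceAs (Module.Finite K (Fin n → K))

variable {n : ℕ} {N : (Fin n → K) → ℝ}

lemma myN_neg (hsmul : ∀ (c : K) (x), N (c • x) = ‖c‖ * N x) (x : Fin n → K) :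
    N (-x) = N x := by
  rw [← neg_one_smul K x, hsmul]; simp

lemma myN_nonneg (h0 : ∀ x, N x = 0 ↔ x = 0)
    (hsmul : ∀ (c : K) (x), N (c • x) = ‖c‖ * N x)
    (hadd : ∀ x y, N (x + y) ≤ max (N x) (N y)) (x : Fin n → K) : 0 ≤ N x := by
  have h := hadd x (-x)
  rw [add_neg_cancel, (h0 0).2 rfl, myN_neg hsmul, max_self] at h
  exact h

lemma norm_bounds [CompleteSpace K] (h0 : ∀ x, N x = 0 ↔ x = 0)
    (hsmul : ∀ (c : K) (x), N (c • x) = ‖c‖ * N x)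
    (hadd : ∀ x y, N (x + y) ≤ max (N x) (N y)) :
    ∃ c C : ℝ, 0 < c ∧ 0 < C ∧ (∀ x, c * ‖x‖ ≤ N x) ∧ (∀ x, N x ≤ C * ‖x‖) := by
  letI : NormedAddCommGroup (PiCopy K n) := AddGroupNorm.toNormedAddCommGroup
    { toFun := N
      map_zero' := (h0 0).2 rfl
      add_le' := fun a b => (hadd a b).trans
        (max_le (le_add_of_nonneg_right (myN_nonneg h0 hsmul hadd b))
          (le_add_of_nonneg_left (myN_nonneg h0 hsmul hadd a)))
      neg' := myN_neg hsmul
      eq_zero_of_map_eq_zero' := fun a ha => (h0 a).1 ha }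
  letI : NormedSpace K (PiCopy K n) := ⟨fun c x => le_of_eq (hsmul c x)⟩
  let f : PiCopy K n →ₗ[K] (Fin n → K) :=
    { toFun := fun x => x, map_add' := fun _ _ => rfl, map_smul' := fun _ _ => rfl }
  let g : (Fin n → K) →ₗ[K] PiCopy K n :=
    { toFun := fun x => x, map_add' := fun _ _ => rfl, map_smul' := fun _ _ => rfl }
  obtain ⟨C₁, hC₁, hf⟩ := (LinearMap.toContinuousLinearMap f).bound
  obtain ⟨C₂, hC₂, hg⟩ := (LinearMap.toContinuousLinearMap g).bound
  refine ⟨C₁⁻¹, C₂, inv_pos.2 hC₁, hC₂, fun x => ?_, fun x => ?_⟩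
  · have := hf x
    -- ‖f x‖ = ‖x‖ (Pi norm), ‖x‖ (copy) = N x
    rw [inv_mul_le_iff₀ hC₁]
    exact this
  · exact hg x

end aux

open Submodule Set

section aux3
variable {K : Type*} [NontriviallyNormedField K] {n : ℕ}

def MyOrtho (N : (Fin n → K) → ℝ) {m : ℕ} (b : Fin m → (Fin n → K)) : Prop :=
  ∀ c : Fin m → K, N (∑ i, c i • b i) = ⨆ i, N (b i) * ‖c i‖


lemma iSup_fin_snoc' {m : ℕ} {f : Fin (m + 1) → ℝ} (hf : ∀ i, 0 ≤ f i) :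
    (⨆ i, f i) = max (⨆ i : Fin m, f i.castSucc) (f (Fin.last m)) := by
  have bddA : BddAbove (Set.range f) := (Set.finite_range f).bddAbove
  have bddB : BddAbove (Set.range fun i : Fin m => f i.castSucc) :=
    (Set.finite_range _).bddAbove
  apply le_antisymm
  · refine Real.iSup_le (fun i => ?_) ?_
    · induction i using Fin.lastCases with
      | last => exact le_max_right _ _
      | cast j => exact le_trans (le_ciSup bddB j) (le_max_left _ _)
    · exact le_max_of_le_right (hf _)
  · refine max_le (Real.iSup_le (fun j => le_ciSup bddA _) ?_) (le_ciSup bddA _)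
    exact le_trans (hf (Fin.last m)) (le_ciSup bddA _)

variable {N : (Fin n → K) → ℝ}

lemma myOrtho_elim0 (h0 : ∀ x, N x = 0 ↔ x = 0) : MyOrtho N (fun i : Fin 0 => i.elim0) := by
  intro c
  rw [Finset.sum_of_isEmpty, (h0 0).2 rfl, Real.iSup_of_isEmpty]

lemma myOrtho_snoc (hnn : ∀ x, 0 ≤ N x)
    (hsmul : ∀ (c : K) (x), N (c • x) = ‖c‖ * N x)
    (hadd : ∀ x y, N (x + y) ≤ max (N x) (N y))
    {m : ℕ} {b : Fin m → (Fin n → K)} {e : Fin n → K}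
    (hb : MyOrtho N b) (hkey : ∀ h ∈ span K (Set.range b), N e ≤ N (e + h)) :
    MyOrtho N (Fin.snoc b e) := by
  have hneg : ∀ x : Fin n → K, N (-x) = N x := by
    intro x; rw [← neg_one_smul K x, hsmul]; simp
  intro c
  set cl := c (Fin.last m) with hcl
  set h : Fin n → K := ∑ i : Fin m, c i.castSucc • b i with hh
  have hmem : h ∈ span K (Set.range b) :=
    sum_mem fun i _ => smul_mem _ _ (subset_span (mem_range_self i))
  have hsum : (∑ i, c i • (Fin.snoc b e : Fin (m+1) → Fin n → K) i) = h + cl • e := by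
    rw [Fin.sum_univ_castSucc]
    simp [hh]
    rfl
  have claimA : ‖cl‖ * N e ≤ N (h + cl • e) := by
    rcases eq_or_ne cl 0 with hc0 | hc0
    · simp [hc0, hnn h]
    · have : h + cl • e = cl • (e + cl⁻¹ • h) := by
        rw [smul_add, smul_smul, mul_inv_cancel₀ hc0, one_smul, add_comm]
      rw [this, hsmul]
      exact mul_le_mul_of_nonneg_left
        (hkey _ (smul_mem _ _ hmem)) (norm_nonneg cl)
  have claimB : N h ≤ N (h + cl • e) := by
    have : N h ≤ max (N (h + cl • e)) (N (-(cl • e))) := by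
      have := hadd (h + cl • e) (-(cl • e))
      simpa using this
    rwa [hneg, hsmul, max_eq_left claimA] at this
  have hval : N (∑ i, c i • (Fin.snoc b e : Fin (m+1) → Fin n → K) i) = max (N h) (‖cl‖ * N e) := by
    rw [hsum]
    refine le_antisymm ?_ (max_le claimB claimA)
    calc N (h + cl • e) ≤ max (N h) (N (cl • e)) := hadd _ _
      _ = max (N h) (‖cl‖ * N e) := by rw [hsmul]
  have hrhs : (⨆ i : Fin (m+1), N ((Fin.snoc b e : Fin (m+1) → Fin n → K) i) * ‖c i‖)
      = max (⨆ j : Fin m, N (b j) * ‖c j.castSucc‖) (N e * ‖cl‖) := by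
    rw [iSup_fin_snoc' (fun i => mul_nonneg (hnn _) (norm_nonneg _))]
    simp
    rfl
  rw [hval, hrhs, mul_comm (N e) ‖cl‖]
  congr 1
  rw [hh]
  exact hb fun j => c j.castSucc

lemma myOrtho_linearIndependent (h0 : ∀ x, N x = 0 ↔ x = 0) (hnn : ∀ x, 0 ≤ N x)
    {m : ℕ} {b : Fin m → (Fin n → K)} (hb : MyOrtho N b) (hbne : ∀ i, b i ≠ 0) :
    LinearIndependent K b := by
  rw [Fintype.linearIndependent_iff]
  intro c hc i
  have h1 : (⨆ i, N (b i) * ‖c i‖) = 0 := by rw [← hb c, hc, (h0 0).2 rfl]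
  have h2 : N (b i) * ‖c i‖ ≤ 0 := by
    rw [← h1]
    exact le_ciSup (f := fun j => N (b j) * ‖c j‖) ((Set.finite_range _).bddAbove) i
  have h3 : 0 < N (b i) := lt_of_le_of_ne (hnn _) (fun hq => hbne i ((h0 _).1 hq.symm))
  have h4 : ‖c i‖ ≤ 0 := by nlinarith [norm_nonneg (c i)]
  exact norm_le_zero_iff.1 h4
end aux3
section lemA
open Submodule Set
variable {K : Type*} [NontriviallyNormedField K] {n : ℕ} {N : (Fin n → K) → ℝ}
variable [CompleteSpace K] [ProperSpace (Fin n → K)]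

lemma exists_ortho_span
    (h0 : ∀ x, N x = 0 ↔ x = 0)
    (hsmul : ∀ (c : K) (x), N (c • x) = ‖c‖ * N x)
    (hadd : ∀ x y, N (x + y) ≤ max (N x) (N y))
    (hcont : Continuous N)
    (cN : ℝ) (hcN : 0 < cN) (hlow : ∀ x, cN * ‖x‖ ≤ N x) :
    ∀ (m : ℕ) (H : Submodule K (Fin n → K)), Module.finrank K H = m →
    ∃ b : Fin m → (Fin n → K), span K (Set.range b) = H ∧ (∀ i, b i ≠ 0) ∧ MyOrtho N b := by
  intro m
  induction m with
  | zero =>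
    intro H hH
    refine ⟨fun i => i.elim0, ?_, fun i => i.elim0, myOrtho_elim0 h0⟩
    have hbot : H = ⊥ := Submodule.finrank_eq_zero.mp hH
    rw [Set.range_eq_empty, Submodule.span_empty, hbot]
  | succ m ih =>
    intro H hH
    have hnn := fun x => myN_nonneg h0 hsmul hadd x
    let B : Module.Basis (Fin (m + 1)) K H := Module.finBasisOfFinrankEq K H hH
    set f : Fin (m + 1) → (Fin n → K) := fun i => (B i : Fin n → K) with hf
    have hfli : LinearIndependent K f :=
      B.linearIndependent.map' H.subtype (Submodule.ker_subtype H)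
    have hfspan : span K (Set.range f) = H := by
      have hrf : Set.range f = H.subtype '' Set.range B := by
        rw [← Set.range_comp]; rfl
      rw [hrf, ← Submodule.map_span, B.span_eq, Submodule.map_top, Submodule.range_subtype]
    set H₀ := span K (Set.range (f ∘ Fin.castSucc)) with hH₀
    have hH₀rank : Module.finrank K H₀ = m := by
      rw [finrank_span_eq_card (hfli.comp _ (Fin.castSucc_injective m))]
      simp
    obtain ⟨b₀, hb₀span, hb₀ne, hb₀⟩ := ih H₀ hH₀rank
    set v := f (Fin.last m) with hv
    have hvH : v ∈ H := hfspan ▸ subset_span (mem_range_self _)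
    have hvnot : v ∉ H₀ := by
      have h1 : Set.range (f ∘ Fin.castSucc) = f '' Set.range Fin.castSucc :=
        Set.range_comp _ _
      have h2 : Fin.last m ∉ Set.range (Fin.castSucc : Fin m → Fin (m + 1)) := by
        rintro ⟨j, hj⟩
        exact absurd hj (Fin.castSucc_lt_last j).ne
      rw [hH₀, h1]
      exact hfli.notMem_span_image h2
    set D := {h : Fin n → K | h ∈ H₀ ∧ N (v - h) ≤ N v} with hD
    have hD0 : (0 : Fin n → K) ∈ D := ⟨zero_mem _, by simp⟩
    have hDclosed : IsClosed D := by
      have : D = (H₀ : Set (Fin n → K)) ∩ {h | N (v - h) ≤ N v} := rfl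
      rw [this]
      exact (Submodule.closed_of_finiteDimensional H₀).inter
        (isClosed_le (hcont.comp (continuous_const.sub continuous_id)) continuous_const)
    have hDsub : D ⊆ Metric.closedBall 0 (N v / cN) := by
      intro h hh
      rw [Metric.mem_closedBall, dist_zero_right]
      have h5 : N h ≤ N v := by
        have h4 := hadd (h - v) v
        rw [sub_add_cancel] at h4
        have h6 : N (h - v) = N (v - h) := by rw [← myN_neg hsmul, neg_sub]
        calc N h ≤ max (N (h - v)) (N v) := h4
          _ ≤ N v := max_le (h6 ▸ hh.2) le_rfl
      rw [le_div_iff₀ hcN]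
      calc ‖h‖ * cN = cN * ‖h‖ := mul_comm _ _
        _ ≤ N h := hlow h
        _ ≤ N v := h5
    have hDcomp : IsCompact D :=
      (isCompact_closedBall (0 : Fin n → K) _).of_isClosed_subset hDclosed hDsub
    obtain ⟨h₀, hh₀D, hmin⟩ := hDcomp.exists_isMinOn ⟨0, hD0⟩
      ((hcont.comp (continuous_const.sub continuous_id)).continuousOn)
    set e := v - h₀ with he
    have hkey : ∀ h ∈ H₀, N e ≤ N (e + h) := by
      intro h hh
      have h9 : e + h = v - (h₀ - h) := by rw [he]; abel
      rw [h9]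
      by_cases hc : N (v - (h₀ - h)) ≤ N v
      · exact (isMinOn_iff.mp hmin) _ ⟨sub_mem hh₀D.1 hh, hc⟩
      · exact hh₀D.2.trans (le_of_not_ge hc)
    have hene : e ≠ 0 := by
      intro h8
      apply hvnot
      have hveq : v = h₀ := by rwa [he, sub_eq_zero] at h8
      rw [hveq]
      exact hh₀D.1
    refine ⟨Fin.snoc b₀ e, ?_, ?_, myOrtho_snoc hnn hsmul hadd hb₀ (by rw [hb₀span]; exact hkey)⟩
    · rw [range_fin_snoc, Submodule.span_insert, hb₀span]
      have hHdec : H = span K {v} ⊔ H₀ := by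
        conv_lhs => rw [← hfspan, ← snoc_comp_castSucc (f := f)]
        rw [range_fin_snoc, Submodule.span_insert]
      rw [hHdec]
      apply le_antisymm
      · apply sup_le
        · rw [span_singleton_le_iff_mem, he]
          exact sub_mem (mem_sup_left (mem_span_singleton_self v)) (mem_sup_right hh₀D.1)
        · exact le_sup_right
      · apply sup_le
        · rw [span_singleton_le_iff_mem]
          have hveq : v = e + h₀ := by rw [he]; abel
          rw [hveq]
          exact add_mem (mem_sup_left (mem_span_singleton_self e)) (mem_sup_right hh₀D.1)
        · exact le_sup_right
    · intro i
      induction i using Fin.lastCases with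
      | last => simpa using hene
      | cast j => simpa using hb₀ne j
end lemA
section lemB
open Submodule Set
variable {K : Type*} [NontriviallyNormedField K] {n : ℕ} {N₁ N₂ : (Fin n → K) → ℝ}
variable [CompleteSpace K] [ProperSpace (Fin n → K)]

lemma exists_max_ratio
    (h0₁ : ∀ x, N₁ x = 0 ↔ x = 0) (h0₂ : ∀ x, N₂ x = 0 ↔ x = 0)
    (hsmul₁ : ∀ (c : K) (x), N₁ (c • x) = ‖c‖ * N₁ x)
    (hsmul₂ : ∀ (c : K) (x), N₂ (c • x) = ‖c‖ * N₂ x)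
    (hadd₁ : ∀ x y, N₁ (x + y) ≤ max (N₁ x) (N₁ y))
    (hcont₁ : Continuous N₁) (hcont₂ : Continuous N₂)
    {H : Submodule K (Fin n → K)} (hHne : H ≠ ⊥) :
    ∃ v ∈ H, v ≠ 0 ∧ ∀ x ∈ H, N₂ x * N₁ v ≤ N₂ v * N₁ x := by
  obtain ⟨c, hc⟩ := NormedField.exists_one_lt_norm K
  have hcpos : (0 : ℝ) < 1 / ‖c‖ := by positivity
  set S := {x : Fin n → K | x ∈ H ∧ 1 / ‖c‖ ≤ ‖x‖ ∧ ‖x‖ ≤ 1} with hS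
  have hSne : S.Nonempty := by
    obtain ⟨x₀, hx₀H, hx₀ne⟩ := Submodule.exists_mem_ne_zero_of_ne_bot hHne
    obtain ⟨d, hd0, hlt, hge, -⟩ := rescale_to_shell hc one_pos hx₀ne
    exact ⟨d • x₀, H.smul_mem d hx₀H, by simpa using hge, hlt.le⟩
  have hSne0 : ∀ x ∈ S, x ≠ 0 := by
    intro x hx h0
    subst h0
    have := hx.2.1
    rw [norm_zero] at this
    linarith
  have hSclosed : IsClosed S := by
    have : S = (H : Set (Fin n → K)) ∩ ({x | 1 / ‖c‖ ≤ ‖x‖} ∩ {x | ‖x‖ ≤ 1}) := rfl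
    rw [this]
    exact (Submodule.closed_of_finiteDimensional H).inter
      ((isClosed_le continuous_const continuous_norm).inter
        (isClosed_le continuous_norm continuous_const))
  have hScomp : IsCompact S :=
    (isCompact_closedBall (0 : Fin n → K) 1).of_isClosed_subset hSclosed
      (fun x hx => by simpa [Metric.mem_closedBall, dist_zero_right] using hx.2.2)
  have hgcont : ContinuousOn (fun x => N₂ x / N₁ x) S :=
    hcont₂.continuousOn.div hcont₁.continuousOn
      (fun x hx => fun h => hSne0 x hx ((h0₁ x).1 h))
  obtain ⟨v, hvS, hmax⟩ := hScomp.exists_isMaxOn hSne hgcont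
  have hN₁pos : ∀ x : Fin n → K, x ≠ 0 → 0 < N₁ x := fun x hx =>
    lt_of_le_of_ne (myN_nonneg h0₁ hsmul₁ hadd₁ x) (fun h => hx ((h0₁ x).1 h.symm))
  refine ⟨v, hvS.1, hSne0 v hvS, fun x hxH => ?_⟩
  rcases eq_or_ne x 0 with rfl | hxne
  · rw [(h0₂ 0).2 rfl, (h0₁ 0).2 rfl, zero_mul, mul_zero]
  · obtain ⟨d, hd0, hlt, hge, -⟩ := rescale_to_shell hc one_pos hxne
    have hdS : d • x ∈ S := ⟨H.smul_mem d hxH, by simpa using hge, hlt.le⟩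
    have hle := (isMaxOn_iff.mp hmax) _ hdS
    have h1 : N₂ (d • x) / N₁ (d • x) = N₂ x / N₁ x := by
      rw [hsmul₁, hsmul₂, mul_div_mul_left _ _ (norm_pos_iff.2 hd0).ne']
    rw [h1, div_le_div_iff₀ (hN₁pos x hxne) (hN₁pos v (hSne0 v hvS))] at hle
    linarith [hle]
end lemB
section lemB2
open Submodule Set
variable {K : Type*} [NontriviallyNormedField K] {n : ℕ} {N₁ N₂ : (Fin n → K) → ℝ}
variable [CompleteSpace K] [ProperSpace (Fin n → K)]

lemma exists_ortho_span₂
    (h0₁ : ∀ x, N₁ x = 0 ↔ x = 0) (h0₂ : ∀ x, N₂ x = 0 ↔ x = 0)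
    (hsmul₁ : ∀ (c : K) (x), N₁ (c • x) = ‖c‖ * N₁ x)
    (hsmul₂ : ∀ (c : K) (x), N₂ (c • x) = ‖c‖ * N₂ x)
    (hadd₁ : ∀ x y, N₁ (x + y) ≤ max (N₁ x) (N₁ y))
    (hadd₂ : ∀ x y, N₂ (x + y) ≤ max (N₂ x) (N₂ y))
    (hcont₁ : Continuous N₁) (hcont₂ : Continuous N₂)
    (c₂ : ℝ) (hc₂ : 0 < c₂) (hlow₂ : ∀ x, c₂ * ‖x‖ ≤ N₂ x) :
    ∀ (m : ℕ) (H : Submodule K (Fin n → K)), Module.finrank K H = m →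
    ∃ b : Fin m → (Fin n → K), span K (Set.range b) = H ∧ (∀ i, b i ≠ 0) ∧
      MyOrtho N₁ b ∧ MyOrtho N₂ b := by
  have hnn₁ := fun x => myN_nonneg h0₁ hsmul₁ hadd₁ x
  have hnn₂ := fun x => myN_nonneg h0₂ hsmul₂ hadd₂ x
  intro m
  induction m with
  | zero =>
    intro H hH
    refine ⟨fun i => i.elim0, ?_, fun i => i.elim0, myOrtho_elim0 h0₁, myOrtho_elim0 h0₂⟩
    have hbot : H = ⊥ := Submodule.finrank_eq_zero.mp hH
    rw [Set.range_eq_empty, Submodule.span_empty, hbot]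
  | succ m ih =>
    intro H hH
    have hHne : H ≠ ⊥ := by
      intro h
      rw [h, finrank_bot] at hH
      exact Nat.succ_ne_zero m hH.symm
    obtain ⟨v, hvH, hvne, hmax⟩ := exists_max_ratio h0₁ h0₂ hsmul₁ hsmul₂ hadd₁ hcont₁ hcont₂ hHne
    obtain ⟨g, hgspan, hgne, hgorth⟩ :=
      exists_ortho_span h0₂ hsmul₂ hadd₂ hcont₂ c₂ hc₂ hlow₂ (m + 1) H hH
    have hgli : LinearIndependent K g := myOrtho_linearIndependent h0₂ hnn₂ hgorth hgne
    obtain ⟨c, hc⟩ := (mem_span_range_iff_exists_fun K).mp (hgspan ▸ hvH)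
    have hN₂v : N₂ v = ⨆ i, N₂ (g i) * ‖c i‖ := by rw [← hc]; exact hgorth c
    obtain ⟨i₀, hi₀⟩ := Finite.exists_max (fun i => N₂ (g i) * ‖c i‖)
    have hsup_eq : (⨆ i, N₂ (g i) * ‖c i‖) = N₂ (g i₀) * ‖c i₀‖ :=
      le_antisymm (ciSup_le hi₀)
        (le_ciSup (f := fun i => N₂ (g i) * ‖c i‖) ((Set.finite_range _).bddAbove) i₀)
    have hN₂v' : N₂ v = N₂ (g i₀) * ‖c i₀‖ := by rw [hN₂v, hsup_eq]
    have hN₂vpos : 0 < N₂ v :=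
      lt_of_le_of_ne (hnn₂ v) (fun h => hvne ((h0₂ v).1 h.symm))
    have hci₀ : c i₀ ≠ 0 := by
      intro h
      rw [h, norm_zero, mul_zero] at hN₂v'
      exact hN₂vpos.ne' (hN₂v' ▸ rfl)
    set H' := span K (Set.range (g ∘ i₀.succAbove)) with hH'
    have hH'rank : Module.finrank K H' = m := by
      rw [finrank_span_eq_card (hgli.comp _ Fin.succAbove_right_injective)]
      simp
    have hH'le : H' ≤ H := by
      rw [hH', span_le, ← hgspan]
      rintro x ⟨j, rfl⟩
      exact subset_span (mem_range_self _)
    -- key inequality for N₂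
    have hkey₂ : ∀ h ∈ H', N₂ v ≤ N₂ (v + h) := by
      intro h hh
      obtain ⟨d, hd⟩ := (mem_span_range_iff_exists_fun K).mp hh
      set p : Fin (m + 1) → K := i₀.insertNth 0 d with hp
      have hpsum : (∑ i, p i • g i) = h := by
        rw [Fin.sum_univ_succAbove _ i₀]
        simp [hp, Fin.insertNth_apply_same, Fin.insertNth_apply_succAbove]
        exact hd
      have hvh : v + h = ∑ i, (c i + p i) • g i := by
        rw [← hc, ← hpsum, ← Finset.sum_add_distrib]
        congr 1
        funext i
        rw [add_smul]
      rw [hvh, hgorth, hN₂v']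
      have : N₂ (g i₀) * ‖c i₀‖ = N₂ (g i₀) * ‖c i₀ + p i₀‖ := by
        simp [hp, Fin.insertNth_apply_same]
      rw [this]
      exact le_ciSup (f := fun i => N₂ (g i) * ‖c i + p i‖) ((Set.finite_range _).bddAbove) i₀
    -- key inequality for N₁
    have hkey₁ : ∀ h ∈ H', N₁ v ≤ N₁ (v + h) := by
      intro h hh
      have h1 := hmax (v + h) (add_mem hvH (hH'le hh))
      have h2 := hkey₂ h hh
      have h3 : N₂ v * N₁ v ≤ N₂ v * N₁ (v + h) := by nlinarith [hnn₁ v]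
      exact le_of_mul_le_mul_left h3 hN₂vpos
    obtain ⟨b₀, hb₀span, hb₀ne, hb₀o₁, hb₀o₂⟩ := ih H' hH'rank
    refine ⟨Fin.snoc b₀ v, ?_, ?_,
      myOrtho_snoc hnn₁ hsmul₁ hadd₁ hb₀o₁ (by rw [hb₀span]; exact hkey₁),
      myOrtho_snoc hnn₂ hsmul₂ hadd₂ hb₀o₂ (by rw [hb₀span]; exact hkey₂)⟩
    · rw [range_fin_snoc, Submodule.span_insert, hb₀span]
      have hrg : Set.range g = insert (g i₀) (Set.range (g ∘ i₀.succAbove)) := by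
        ext x
        constructor
        · rintro ⟨i, rfl⟩
          rcases eq_or_ne i i₀ with rfl | hne
          · exact Set.mem_insert _ _
          · obtain ⟨j, hj⟩ := Fin.exists_succAbove_eq hne
            exact Set.mem_insert_of_mem _ ⟨j, by simp [hj]⟩
        · rintro (rfl | ⟨j, rfl⟩)
          · exact ⟨i₀, rfl⟩
          · exact ⟨i₀.succAbove j, rfl⟩
      have hHdec : H = span K {g i₀} ⊔ H' := by
        rw [← hgspan, hrg, Submodule.span_insert, hH']
      rw [hHdec]
      set t : Fin n → K := ∑ j, c (i₀.succAbove j) • g (i₀.succAbove j) with ht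
      have htH' : t ∈ H' := sum_mem fun j _ => smul_mem _ _ (subset_span (mem_range_self j))
      have hvdec : v = c i₀ • g i₀ + t := by
        rw [← hc, Fin.sum_univ_succAbove _ i₀, ht]
      apply le_antisymm
      · apply sup_le
        · rw [span_singleton_le_iff_mem, hvdec]
          exact add_mem (mem_sup_left (smul_mem _ _ (mem_span_singleton_self _)))
            (mem_sup_right htH')
        · exact le_sup_right
      · apply sup_le
        · rw [span_singleton_le_iff_mem]
          have hgi₀ : g i₀ = (c i₀)⁻¹ • (v - t) := by
            rw [hvdec, add_sub_cancel_right, smul_smul, inv_mul_cancel₀ hci₀, one_smul]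
          rw [hgi₀]
          exact smul_mem _ _ (sub_mem (mem_sup_left (mem_span_singleton_self v))
            (mem_sup_right htH'))
        · exact le_sup_right
    · intro i
      induction i using Fin.lastCases with
      | last => simpa using hvne
      | cast j => simpa using hb₀ne j
end lemB2
section final
open Submodule Set
variable {K : Type*} [NontriviallyNormedField K] {n : ℕ} {N : (Fin n → K) → ℝ}

lemma myN_continuous (hnn : ∀ x, 0 ≤ N x)
    (hadd : ∀ x y, N (x + y) ≤ max (N x) (N y))
    (C : ℝ) (hCpos : 0 < C) (hC : ∀ x, N x ≤ C * ‖x‖) : Continuous N := by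
  have key : ∀ x y : Fin n → K, N x - N y ≤ C * ‖x - y‖ := by
    intro x y
    have h := hadd (x - y) y
    rw [sub_add_cancel] at h
    rcases le_max_iff.1 h with h' | h'
    · linarith [hC (x - y), hnn y]
    · have := hC (x - y)
      have := mul_nonneg hCpos.le (norm_nonneg (x - y))
      linarith
  have hlip : LipschitzWith (Real.toNNReal C) N := by
    apply LipschitzWith.of_dist_le_mul
    intro x y
    rw [Real.coe_toNNReal C hCpos.le, Real.dist_eq, abs_sub_le_iff]
    constructor
    · simpa [dist_eq_norm] using key x y
    · have h2 := key y x
      rw [← norm_neg, neg_sub] at h2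
      simpa [dist_eq_norm] using h2
  exact hlip.continuous

end final

/-- Over a non-archimedean local field `K`, any two ultrametric norms on `Kⁿ` can be
simultaneously diagonalized: there is a common basis with respect to which both norms are
of the form `x ↦ max_i (αᵢ * ‖xᵢ‖)`. -/
theorem stmt5 (K : Type*) [NontriviallyNormedField K] [LocallyCompactSpace K]
    (hu : ∀ x y : K, ‖x + y‖ ≤ max ‖x‖ ‖y‖)
    (n : ℕ) (N₁ N₂ : (Fin n → K) → ℝ)
    (hN₁0 : ∀ x, N₁ x = 0 ↔ x = 0)
    (hN₁smul : ∀ (c : K) (x), N₁ (c • x) = ‖c‖ * N₁ x)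
    (hN₁add : ∀ x y, N₁ (x + y) ≤ max (N₁ x) (N₁ y))
    (hN₂0 : ∀ x, N₂ x = 0 ↔ x = 0)
    (hN₂smul : ∀ (c : K) (x), N₂ (c • x) = ‖c‖ * N₂ x)
    (hN₂add : ∀ x y, N₂ (x + y) ≤ max (N₂ x) (N₂ y)) :
    ∃ (e : Module.Basis (Fin n) K (Fin n → K)) (α β : Fin n → ℝ),
      (∀ i, 0 < α i) ∧ (∀ i, 0 < β i) ∧
      (∀ c : Fin n → K, N₁ (∑ i, c i • e i) = ⨆ i, α i * ‖c i‖) ∧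
      (∀ c : Fin n → K, N₂ (∑ i, c i • e i) = ⨆ i, β i * ‖c i‖) := by
  haveI : ProperSpace K := ProperSpace.of_locallyCompactSpace K
  haveI : ProperSpace (Fin n → K) := pi_properSpace
  obtain ⟨c₁, C₁, hc₁, hC₁, hlow₁, hup₁⟩ := norm_bounds hN₁0 hN₁smul hN₁add
  obtain ⟨c₂, C₂, hc₂, hC₂, hlow₂, hup₂⟩ := norm_bounds hN₂0 hN₂smul hN₂add
  have hnn₁ := fun x => myN_nonneg hN₁0 hN₁smul hN₁add x
  have hnn₂ := fun x => myN_nonneg hN₂0 hN₂smul hN₂add x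
  have hcont₁ := myN_continuous hnn₁ hN₁add C₁ hC₁ hup₁
  have hcont₂ := myN_continuous hnn₂ hN₂add C₂ hC₂ hup₂
  have hrank : Module.finrank K (⊤ : Submodule K (Fin n → K)) = n := by
    rw [finrank_top, Module.finrank_fin_fun]
  obtain ⟨b, hbspan, hbne, ho₁, ho₂⟩ :=
    exists_ortho_span₂ hN₁0 hN₂0 hN₁smul hN₂smul hN₁add hN₂add hcont₁ hcont₂
      c₂ hc₂ hlow₂ n ⊤ hrank
  have hli := myOrtho_linearIndependent hN₁0 hnn₁ ho₁ hbne
  let e : Module.Basis (Fin n) K (Fin n → K) := Module.Basis.mk hli hbspan.ge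
  have he : ∀ i, e i = b i := fun i => Module.Basis.mk_apply hli hbspan.ge i
  refine ⟨e, fun i => N₁ (b i), fun i => N₂ (b i), ?_, ?_, ?_, ?_⟩
  · exact fun i => lt_of_le_of_ne (hnn₁ _) (fun h => hbne i ((hN₁0 _).1 h.symm))
  · exact fun i => lt_of_le_of_ne (hnn₂ _) (fun h => hbne i ((hN₂0 _).1 h.symm))
  · intro c
    simp only [he]
    exact ho₁ c
  · intro c
    simp only [he]
    exact ho₂ c
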